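/- arXiv:1102.3622 — 2 statements merged into one kernel-verified Lean document; each statement's English description precedes it below -/
import Mathlib

section
/- Let k be a field and E a nonempty finite set. Let (C_*, ∂) be the one-sided Koszul complex: C_m = ⊕_{G ⊆ E, |G| = m} Λ^m(k^G), ∂(e_1∧…∧e_m) = Σ_{i=1}^{m} (−1)^{i} e_1∧…∧ê_i∧…∧e_m. Let (Ñ_*, d) be the one-sided normalized bar complex: Ñ_m is the free k-vector space on tuples (A_1, …, A_m; F) where A_1, …, A_m are pairwise disjoint nonempty subsets of E, F is a further disjoint (possibly empty) subset, and A_1 ∪ … ∪ A_m ∪ F = E, with d(A_1, …, A_m; F) = Σ_{i=1}^{m−1} (−1)^{i} (A_1, …, A_i ∪ A_{i+1}, …, A_m; F) + (−1)^{m} (A_1, …, A_{m−1}; F ∪ A_m). Define κ : C_m → Ñ_m by κ(e_1∧…∧e_m) = Σ_{σ ∈ S_m} sgn(σ) ({e_{σ(1)}}, …, {e_{σ(m)}}; E ∖ {e_1, …, e_m}). Then κ is a chain map, both complexes are exact (H_m = 0 for all m ≥ 0), and in particular κ is a quasi-isomorphism. -/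
/- STATEMENT 6: for a nonempty finite set `E`, the antisymmetrization map
`κ(e_1∧…∧e_m) = Σ_{σ ∈ S_m} sgn(σ) ({e_{σ(1)}}, …, {e_{σ(m)}}; E ∖ {e_1, …, e_m})`
from the one-sided Koszul complex `C_*` to the one-sided normalized bar complex
`Ñ_*` is a chain map, both complexes are exact (`H_m = 0` for all `m ≥ 0`), and in
particular `κ` is a quasi-isomorphism. -/

open Finset

/-- `G` is an `m`-element subset of `E`. -/
def IsKSub {α : Type} [DecidableEq α] (E : Finset α) (m : ℕ) (G : Finset α) : Prop :=
  G ⊆ E ∧ G.card = m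

instance {α : Type} [DecidableEq α] (E : Finset α) (m : ℕ) :
    DecidablePred (IsKSub E m) := fun _ => by unfold IsKSub; infer_instance

/-- `(A_1, …, A_r; F)`: a tuple of length `r + 1` of pairwise disjoint subsets of
`E` with union `E`, whose first `r` blocks are nonempty (the last block `F` may be
empty). -/
def IsLDecomp {α : Type} [DecidableEq α] (E : Finset α) {r : ℕ}
    (f : Fin (r + 1) → Finset α) : Prop :=
  (∀ i : Fin (r + 1), i.val < r → f i ≠ ∅) ∧
    (∀ i j, i ≠ j → Disjoint (f i) (f j)) ∧ Finset.univ.sup f = E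

instance {α : Type} [DecidableEq α] (E : Finset α) (r : ℕ) :
    DecidablePred (IsLDecomp E (r := r)) := fun _ => by unfold IsLDecomp; infer_instance

/-- The basis vector of the free `k`-module indexed by `x`, if `x` satisfies the
predicate `P`; `0` otherwise (in the intended uses `P x` always holds). -/
noncomputable def bas (k : Type) [Field k] {β : Type} (P : β → Prop) [DecidablePred P]
    (x : β) : {y : β // P y} →₀ k :=
  if h : P x then Finsupp.single ⟨x, h⟩ (1 : k) else 0

/-- Merge blocks `i` and `i+1` of a tuple of length `r+1`. -/
def merge {α : Type} [DecidableEq α] {r : ℕ} (i : ℕ) (f : Fin (r + 1) → Finset α)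
    (j : Fin r) : Finset α :=
  if j.val < i then f j.castSucc
  else if j.val = i then f j.castSucc ∪ f j.succ
  else f j.succ

/-- `C_m = ⊕_{G ⊆ E, |G| = m} Λ^m(k^G)`: the free `k`-module on `m`-element subsets
of `E`, the summand of `G` encoded by the canonical basis vector given by the
increasing enumeration of `G`. -/
noncomputable abbrev CMod (k : Type) [Field k] {α : Type} [DecidableEq α]
    (E : Finset α) (m : ℕ) : Type :=
  {G : Finset α // IsKSub E m G} →₀ k

/-- `Ñ_m`: the free `k`-module on tuples `(A_1, …, A_m; F)` as above. -/
noncomputable abbrev NtMod (k : Type) [Field k] {α : Type} [DecidableEq α]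
    (E : Finset α) (m : ℕ) : Type :=
  {f : Fin (m + 1) → Finset α // IsLDecomp E (r := m) f} →₀ k

/-- `∂ : C_{m+1} → C_m`, `∂(e_1∧…∧e_r) = Σ_i (−1)^i e_1∧…∧ê_i∧…∧e_r`. -/
noncomputable def cD (k : Type) [Field k] {α : Type} [DecidableEq α] [LinearOrder α]
    (E : Finset α) (m : ℕ) : CMod k E (m + 1) →ₗ[k] CMod k E m :=
  Finsupp.lsum k fun q => LinearMap.toSpanSingleton k _
    (∑ a ∈ q.val,
      ((-1 : k) ^ ((q.val.sort (· ≤ ·)).idxOf a + 1)) •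
        bas k (IsKSub E m) (q.val.erase a))

/-- `d : Ñ_{m+1} → Ñ_m`: `d(A_1, …, A_{m+1}; F) = Σ_{i=1}^{m} (−1)^i
(A_1, …, A_i ∪ A_{i+1}, …, A_{m+1}; F) + (−1)^{m+1} (A_1, …, A_m; F ∪ A_{m+1})`,
i.e. the merge at 0-based position `i` carries the sign `(−1)^{i+1}`. -/
noncomputable def ntD (k : Type) [Field k] {α : Type} [DecidableEq α]
    (E : Finset α) (m : ℕ) : NtMod k E (m + 1) →ₗ[k] NtMod k E m :=
  Finsupp.lsum k fun q => LinearMap.toSpanSingleton k _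
    (∑ i ∈ Finset.range (m + 1),
      ((-1 : k) ^ (i + 1)) • bas k (IsLDecomp E (r := m)) (merge i q.val))

/-- The singleton `{e_{i+1}}` of the element at (0-based) position `i` in the
increasing enumeration of `G` (`∅` if `i` is out of range). -/
def singBlock {α : Type} [LinearOrder α] (G : Finset α) (i : ℕ) : Finset α :=
  ((G.sort (· ≤ ·))[i]?).elim ∅ (fun a => {a})

/-- A permutation of `Fin m` as a function on `ℕ` (identity out of range). -/
def permVal {m : ℕ} (σ : Equiv.Perm (Fin m)) (i : ℕ) : ℕ :=
  if h : i < m then (σ ⟨i, h⟩).val else i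

/-- The tuple `({e_{σ(1)}}, …, {e_{σ(m)}}; E ∖ G)` associated to an `m`-element
subset `G ⊆ E` and a permutation `σ ∈ S_m`. -/
def kapTuple6 {α : Type} [DecidableEq α] [LinearOrder α] {m : ℕ} (E G : Finset α)
    (σ : Equiv.Perm (Fin m)) (j : Fin (m + 1)) : Finset α :=
  if j.val = m then E \ G else singBlock G (permVal σ j.val)

/-- `κ : C_m → Ñ_m`,
`κ(e_1∧…∧e_m) = Σ_{σ ∈ S_m} sgn(σ) ({e_{σ(1)}}, …, {e_{σ(m)}}; E ∖ G)`. -/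
noncomputable def kap6 (k : Type) [Field k] {α : Type} [DecidableEq α] [LinearOrder α]
    (E : Finset α) (m : ℕ) : CMod k E m →ₗ[k] NtMod k E m :=
  Finsupp.lsum k fun q => LinearMap.toSpanSingleton k _
    (∑ σ : Equiv.Perm (Fin m),
      ((Equiv.Perm.sign σ : ℤ) : k) • bas k (IsLDecomp E (r := m)) (kapTuple6 E q.val σ))
namespace OSK

variable {k : Type} [Field k] {α : Type} [DecidableEq α] [LinearOrder α] {E : Finset α}

lemma bas_pos {β : Type} (P : β → Prop) [DecidablePred P] {x : β} (h : P x) :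
    bas k P x = Finsupp.single ⟨x, h⟩ 1 := dif_pos h

/-- extend a tuple by an empty block -/
def ext0 {r : ℕ} (f : Fin (r + 1) → Finset α) (j : Fin (r + 2)) : Finset α :=
  if h : j.val < r + 1 then f ⟨j.val, h⟩ else ∅

lemma merge_ext0 {r : ℕ} (f : Fin (r + 2) → Finset α) {i : ℕ} (hi : i ≤ r) :
    merge i (ext0 f) = ext0 (merge i f) := by
  funext j
  unfold merge ext0
  simp only [Fin.coe_castSucc, Fin.val_succ]
  split_ifs <;> first | rfl | omega | simp | skip
  all_goals omega

lemma merge_ext0_top {r : ℕ} (f : Fin (r + 1) → Finset α) :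
    merge r (ext0 f) = f := by
  funext j
  unfold merge ext0
  simp only [Fin.coe_castSucc, Fin.val_succ]
  split_ifs <;> first | rfl | omega |
    (rw [Finset.union_empty]; try exact congrArg f (Fin.ext rfl))

lemma ext0_merge_of_empty {r : ℕ} (f : Fin (r + 2) → Finset α)
    (h : f (Fin.last (r + 1)) = ∅) : ext0 (merge r f) = f := by
  funext j
  unfold ext0 merge
  simp only [Fin.coe_castSucc, Fin.val_succ]
  split_ifs with h1 h2 h3 <;> first | rfl | omega | skip
  · have e1 : ((⟨(j : ℕ), by omega⟩ : Fin (r + 1)).succ) = Fin.last (r + 1) := by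
      apply Fin.ext; simp; omega
    rw [e1, h, Finset.union_empty]
    exact congrArg f (Fin.ext rfl)
  · have : j = Fin.last (r + 1) := Fin.ext (by simp; omega)
    rw [this, h]

lemma sup_ext0 {r : ℕ} (f : Fin (r + 1) → Finset α) :
    Finset.univ.sup (ext0 f) = Finset.univ.sup f := by
  apply le_antisymm
  · apply Finset.sup_le
    intro j _
    unfold ext0
    split
    · exact Finset.le_sup (Finset.mem_univ _)
    · exact bot_le
  · apply Finset.sup_le
    intro j _
    have h : (ext0 f) j.castSucc = f j := by
      unfold ext0
      rw [dif_pos (by simpa using j.isLt : (j.castSucc : ℕ) < r + 1)]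
      exact congrArg f (Fin.ext (by simp))
    exact le_trans (le_of_eq h.symm) (Finset.le_sup (Finset.mem_univ _))

lemma isLDecomp_ext0 {r : ℕ} {f : Fin (r + 1) → Finset α} (hf : IsLDecomp E f)
    (hne : f (Fin.last r) ≠ ∅) : IsLDecomp E (r := r + 1) (ext0 f) := by
  obtain ⟨h1, h2, h3⟩ := hf
  refine ⟨?_, ?_, ?_⟩
  · intro i hi
    unfold ext0
    rw [dif_pos hi]
    rcases Nat.lt_or_ge i.val r with h | h
    · exact h1 _ h
    · have : (⟨i.val, hi⟩ : Fin (r+1)) = Fin.last r := Fin.ext (by simp <;> omega)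
      rw [this]; exact hne
  · intro i j hij
    unfold ext0
    split_ifs with hi hj hj
    · refine h2 _ _ (fun e => hij (Fin.ext ?_))
      simpa using congrArg Fin.val e
    · simp
    · simp
    · simp
  · rw [sup_ext0]; exact h3

lemma sup_merge {r : ℕ} (f : Fin (r + 2) → Finset α) {i : ℕ} (hi : i ≤ r) :
    Finset.univ.sup (merge i f) = Finset.univ.sup f := by
  apply le_antisymm
  · apply Finset.sup_le
    intro j _
    unfold merge
    split_ifs
    · exact Finset.le_sup (Finset.mem_univ _)
    · exact sup_le (Finset.le_sup (Finset.mem_univ _)) (Finset.le_sup (Finset.mem_univ _))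
    · exact Finset.le_sup (Finset.mem_univ _)
  · apply Finset.sup_le
    intro j _
    rcases Nat.lt_trichotomy j.val i with h | h | h
    · have e : merge i f ⟨j.val, by omega⟩ = f j := by
        unfold merge; rw [if_pos h]; exact congrArg f (Fin.ext rfl)
      exact le_trans (le_of_eq e.symm) (Finset.le_sup (Finset.mem_univ _))
    · have e : f j ≤ merge i f ⟨i, by omega⟩ := by
        unfold merge
        rw [if_neg (lt_irrefl i), if_pos rfl]
        have : f j = f (⟨i, by omega⟩ : Fin (r+1)).castSucc := congrArg f (Fin.ext h)
        rw [this]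
        exact le_sup_left
      exact le_trans e (Finset.le_sup (Finset.mem_univ _))
    · rcases Nat.eq_or_lt_of_le (by omega : i + 1 ≤ j.val) with h'' | h''
      · have e : f j ≤ merge i f ⟨i, by omega⟩ := by
          unfold merge
          rw [if_neg (lt_irrefl i), if_pos rfl]
          have : f j = f (⟨i, by omega⟩ : Fin (r+1)).succ := congrArg f (Fin.ext h''.symm)
          rw [this]
          exact le_sup_right
        exact le_trans e (Finset.le_sup (Finset.mem_univ _))
      · have e : merge i f ⟨j.val - 1, by omega⟩ = f j := by
          unfold merge
          rw [if_neg (by first | omega | (simp <;> omega)), if_neg (by first | omega | (simp <;> omega))]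
          exact congrArg f (Fin.ext (by first | omega | (simp <;> omega)))
        exact le_trans (le_of_eq e.symm) (Finset.le_sup (Finset.mem_univ _))

lemma isLDecomp_merge {r : ℕ} {f : Fin (r + 2) → Finset α}
    (hf : IsLDecomp E (r := r + 1) f) {i : ℕ} (hi : i ≤ r) :
    IsLDecomp E (r := r) (merge i f) := by
  obtain ⟨h1, h2, h3⟩ := hf
  refine ⟨?_, ?_, ?_⟩
  · intro j hj
    unfold merge
    split_ifs with ha hb
    · exact h1 _ (by simp <;> omega)
    · intro hc
      rw [Finset.union_eq_empty] at hc
      exact h1 j.castSucc (by simp <;> omega) hc.1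
    · exact h1 _ (by simp <;> omega)
  · intro a b hab
    have hab' : a.val ≠ b.val := fun e => hab (Fin.ext e)
    have key : ∀ x y : Fin (r + 2), x.val ≠ y.val → Disjoint (f x) (f y) :=
      fun x y h => h2 x y (fun e => h (congrArg Fin.val e))
    unfold merge
    split_ifs with h1' h2' h3' h4' h5' h6' h7' h8' <;>
      first
        | exact key _ _ (by simp only [Fin.coe_castSucc, Fin.val_succ] <;> omega)
        | (rw [Finset.disjoint_union_left]
           exact ⟨key _ _ (by simp only [Fin.coe_castSucc, Fin.val_succ] <;> omega),
                  key _ _ (by simp only [Fin.coe_castSucc, Fin.val_succ] <;> omega)⟩)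
        | (rw [Finset.disjoint_union_right]
           exact ⟨key _ _ (by simp only [Fin.coe_castSucc, Fin.val_succ] <;> omega),
                  key _ _ (by simp only [Fin.coe_castSucc, Fin.val_succ] <;> omega)⟩)
        | omega
  · rw [sup_merge f hi]; exact h3
variable (k : Type) [Field k] {α : Type} [DecidableEq α] [LinearOrder α]

/-- contracting homotopy for the normalized bar complex -/
noncomputable def hN (E : Finset α) (m : ℕ) : NtMod k E m →ₗ[k] NtMod k E (m + 1) :=
  Finsupp.lsum k fun q => LinearMap.toSpanSingleton k _
    (if q.val (Fin.last m) = ∅ then 0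
     else ((-1 : k) ^ (m + 1)) • bas k (IsLDecomp E (r := m + 1)) (ext0 q.val))

variable {k}

lemma ntD_single {E : Finset α} {m : ℕ} (q : {f : Fin (m + 2) → Finset α // IsLDecomp E (r := m + 1) f}) :
    ntD k E m (Finsupp.single q (1 : k)) =
      ∑ i ∈ Finset.range (m + 1), ((-1 : k) ^ (i + 1)) • bas k (IsLDecomp E (r := m)) (merge i q.val) := by
  rw [ntD, Finsupp.lsum_single, LinearMap.toSpanSingleton_apply, one_smul]

lemma hN_single {E : Finset α} {m : ℕ} (q : {f : Fin (m + 1) → Finset α // IsLDecomp E (r := m) f}) :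
    hN k E m (Finsupp.single q (1 : k)) =
      (if q.val (Fin.last m) = ∅ then 0
       else ((-1 : k) ^ (m + 1)) • bas k (IsLDecomp E (r := m + 1)) (ext0 q.val)) := by
  rw [hN, Finsupp.lsum_single, LinearMap.toSpanSingleton_apply, one_smul]

lemma ntD_bas {E : Finset α} {m : ℕ} {f : Fin (m + 2) → Finset α} (hf : IsLDecomp E (r := m + 1) f) :
    ntD k E m (bas k (IsLDecomp E (r := m + 1)) f) =
      ∑ i ∈ Finset.range (m + 1), ((-1 : k) ^ (i + 1)) • bas k (IsLDecomp E (r := m)) (merge i f) := by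
  rw [bas_pos _ hf, ntD_single ⟨f, hf⟩]

lemma hN_bas {E : Finset α} {m : ℕ} {f : Fin (m + 1) → Finset α} (hf : IsLDecomp E (r := m) f) :
    hN k E m (bas k (IsLDecomp E (r := m)) f) =
      (if f (Fin.last m) = ∅ then 0
       else ((-1 : k) ^ (m + 1)) • bas k (IsLDecomp E (r := m + 1)) (ext0 f)) := by
  rw [bas_pos _ hf, hN_single ⟨f, hf⟩]

lemma merge_last_lt {r : ℕ} (f : Fin (r + 2) → Finset α) {i : ℕ} (hi : i < r) :
    (merge i f) (Fin.last r) = f (Fin.last (r + 1)) := by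
  unfold merge
  rw [if_neg (by simp <;> omega), if_neg (by simp <;> omega)]
  rw [Fin.succ_last]

lemma merge_last_eq {r : ℕ} (f : Fin (r + 2) → Finset α) :
    (merge r f) (Fin.last r) = f ((Fin.last r).castSucc) ∪ f (Fin.last (r + 1)) := by
  unfold merge
  rw [if_neg (by simp), if_pos (by simp)]
  rw [Fin.succ_last]

lemma neg_one_sq_pow (n : ℕ) : ((-1 : k) ^ n) * ((-1 : k) ^ n) = 1 := by
  rw [← pow_add]
  exact Even.neg_one_pow ⟨n, by ring⟩

lemma keyN {E : Finset α} {m : ℕ} (q : {f : Fin (m + 2) → Finset α // IsLDecomp E (r := m + 1) f}) :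
    ntD k E (m + 1) (hN k E (m + 1) (Finsupp.single q (1 : k))) +
      hN k E m (ntD k E m (Finsupp.single q (1 : k))) = Finsupp.single q (1 : k) := by
  obtain ⟨f, hf⟩ := q
  by_cases hF : f (Fin.last (m + 1)) = ∅
  · rw [hN_single ⟨f, hf⟩, if_pos hF, map_zero, zero_add, ntD_single ⟨f, hf⟩, map_sum,
      Finset.sum_range_succ]
    have hzero : ∀ i ∈ Finset.range m,
        hN k E m (((-1 : k) ^ (i + 1)) • bas k (IsLDecomp E (r := m)) (merge i f)) = 0 := by
      intro i hi
      rw [Finset.mem_range] at hi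
      rw [map_smul, hN_bas (isLDecomp_merge hf (by omega)), if_pos (by
        rw [merge_last_lt f hi]; exact hF), smul_zero]
    rw [Finset.sum_eq_zero hzero, zero_add, map_smul,
      hN_bas (isLDecomp_merge hf (le_refl m)), if_neg (by
        rw [merge_last_eq f, hF, Finset.union_empty]
        exact hf.1 _ (by simp))]
    rw [smul_smul, neg_one_sq_pow, one_smul, ext0_merge_of_empty f hF, bas_pos _ hf]
  · rw [hN_single ⟨f, hf⟩, if_neg hF, map_smul,
      ntD_bas (isLDecomp_ext0 hf hF), Finset.sum_range_succ, merge_ext0_top f,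
      smul_add, smul_smul, neg_one_sq_pow, one_smul, bas_pos _ hf]
    rw [ntD_single ⟨f, hf⟩, map_sum]
    have hterm : ∀ i ∈ Finset.range (m + 1),
        hN k E m (((-1 : k) ^ (i + 1)) • bas k (IsLDecomp E (r := m)) (merge i f)) =
          ((-1 : k) ^ (i + 1) * (-1 : k) ^ (m + 1)) •
            bas k (IsLDecomp E (r := m + 1)) (ext0 (merge i f)) := by
      intro i hi
      rw [Finset.mem_range] at hi
      rw [map_smul, hN_bas (isLDecomp_merge hf (by omega)), if_neg ?_, smul_smul]
      rcases Nat.lt_or_ge i m with h | h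
      · rw [merge_last_lt f h]; exact hF
      · have : i = m := by omega
        subst this
        rw [merge_last_eq f]
        intro hc
        rw [Finset.union_eq_empty] at hc
        exact hF hc.2
    rw [Finset.sum_congr rfl hterm]
    have hsum0 : True := trivial
    have hmerge : ∀ i ∈ Finset.range (m + 1),
        ((-1 : k) ^ (m + 2)) • (((-1 : k) ^ (i + 1)) •
          bas k (IsLDecomp E (r := m + 1)) (merge i (ext0 f))) +
        ((-1 : k) ^ (i + 1) * (-1 : k) ^ (m + 1)) •
          bas k (IsLDecomp E (r := m + 1)) (ext0 (merge i f)) = 0 := by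
      intro i hi
      rw [Finset.mem_range] at hi
      rw [merge_ext0 f (by omega), smul_smul]
      rw [← add_smul]
      have : (-1 : k) ^ (m + 2) * (-1 : k) ^ (i + 1) + (-1 : k) ^ (i + 1) * (-1 : k) ^ (m + 1) = 0 := by
        rw [pow_succ]; ring
      rw [this, zero_smul]
    have hsum : ((-1 : k) ^ (m + 2)) • (∑ i ∈ Finset.range (m + 1), ((-1 : k) ^ (i + 1)) •
          bas k (IsLDecomp E (r := m + 1)) (merge i (ext0 f)))
        + ∑ i ∈ Finset.range (m + 1), (((-1 : k) ^ (i + 1) * (-1 : k) ^ (m + 1)) •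
          bas k (IsLDecomp E (r := m + 1)) (ext0 (merge i f))) = 0 := by
      rw [Finset.smul_sum, ← Finset.sum_add_distrib]
      exact Finset.sum_eq_zero hmerge
    rw [add_right_comm, hsum, zero_add]

lemma htpyN {E : Finset α} (m : ℕ) (x : NtMod k E (m + 1)) :
    ntD k E (m + 1) (hN k E (m + 1) x) + hN k E m (ntD k E m x) = x := by
  have hmaps : (ntD k E (m + 1)).comp (hN k E (m + 1)) + (hN k E m).comp (ntD k E m)
      = LinearMap.id := by
    apply Finsupp.lhom_ext
    intro q b
    have hb : (Finsupp.single q b : NtMod k E (m + 1)) = b • Finsupp.single q 1 := by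
      rw [Finsupp.smul_single, smul_eq_mul, mul_one]
    rw [LinearMap.add_apply, LinearMap.comp_apply, LinearMap.comp_apply, LinearMap.id_apply, hb]
    simp only [map_smul]
    rw [← smul_add, keyN q]
  calc ntD k E (m + 1) (hN k E (m + 1) x) + hN k E m (ntD k E m x)
      = ((ntD k E (m + 1)).comp (hN k E (m + 1)) + (hN k E m).comp (ntD k E m)) x := rfl
    _ = x := by rw [hmaps]; rfl

lemma htpyN0 {E : Finset α} (hE : E.Nonempty) (x : NtMod k E 0) :
    ntD k E 0 (hN k E 0 x) = x := by
  have hmaps : (ntD k E 0).comp (hN k E 0) = LinearMap.id := by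
    apply Finsupp.lhom_ext
    intro q b
    obtain ⟨f, hfp⟩ := q
    have hf0 : f 0 = E := by
      have h := hfp.2.2
      rw [show (Finset.univ : Finset (Fin 1)) = {0} from rfl, Finset.sup_singleton] at h
      exact h
    have hKey : ntD k E 0 (hN k E 0 (Finsupp.single ⟨f, hfp⟩ (1 : k))) = Finsupp.single ⟨f, hfp⟩ 1 := by
      have hne : f (Fin.last 0) ≠ ∅ := by
        rw [show Fin.last 0 = 0 from rfl, hf0]
        exact Finset.nonempty_iff_ne_empty.mp hE
      rw [hN_single ⟨f, hfp⟩, if_neg hne, map_smul, ntD_bas (isLDecomp_ext0 hfp hne),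
        Finset.sum_range_one, merge_ext0_top f, smul_smul, neg_one_sq_pow, one_smul, bas_pos _ hfp]
    have hb : (Finsupp.single (⟨f, hfp⟩ : {f : Fin 1 → Finset α // IsLDecomp E (r := 0) f}) b
        : NtMod k E 0) = b • Finsupp.single ⟨f, hfp⟩ 1 := by
      rw [Finsupp.smul_single, smul_eq_mul, mul_one]
    rw [LinearMap.comp_apply, LinearMap.id_apply, hb]
    simp only [map_smul]
    rw [hKey]
  calc ntD k E 0 (hN k E 0 x) = ((ntD k E 0).comp (hN k E 0)) x := rfl
    _ = x := by rw [hmaps]; rfl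
section CPart
variable (k : Type) [Field k] {α : Type} [DecidableEq α] [LinearOrder α]

/-- contracting homotopy for the Koszul complex, given by inserting `e` -/
noncomputable def hC (E : Finset α) (e : α) (m : ℕ) : CMod k E m →ₗ[k] CMod k E (m + 1) :=
  Finsupp.lsum k fun q => LinearMap.toSpanSingleton k _
    (if e ∈ q.val then 0 else (-1 : k) • bas k (IsKSub E (m + 1)) (insert e q.val))

variable {k} {E : Finset α} {e : α}

lemma cD_single {m : ℕ} (q : {G : Finset α // IsKSub E (m + 1) G}) :
    cD k E m (Finsupp.single q (1 : k)) =
      ∑ a ∈ q.val, ((-1 : k) ^ ((q.val.sort (· ≤ ·)).idxOf a + 1)) •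
        bas k (IsKSub E m) (q.val.erase a) := by
  rw [cD, Finsupp.lsum_single, LinearMap.toSpanSingleton_apply, one_smul]

lemma hC_single {m : ℕ} (q : {G : Finset α // IsKSub E m G}) :
    hC k E e m (Finsupp.single q (1 : k)) =
      (if e ∈ q.val then 0 else (-1 : k) • bas k (IsKSub E (m + 1)) (insert e q.val)) := by
  rw [hC, Finsupp.lsum_single, LinearMap.toSpanSingleton_apply, one_smul]

lemma cD_bas {m : ℕ} {G : Finset α} (hG : IsKSub E (m + 1) G) :
    cD k E m (bas k (IsKSub E (m + 1)) G) =
      ∑ a ∈ G, ((-1 : k) ^ ((G.sort (· ≤ ·)).idxOf a + 1)) •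
        bas k (IsKSub E m) (G.erase a) := by
  rw [bas_pos _ hG, cD_single ⟨G, hG⟩]

lemma hC_bas {m : ℕ} {G : Finset α} (hG : IsKSub E m G) :
    hC k E e m (bas k (IsKSub E m) G) =
      (if e ∈ G then 0 else (-1 : k) • bas k (IsKSub E (m + 1)) (insert e G)) := by
  rw [bas_pos _ hG, hC_single ⟨G, hG⟩]

lemma isKSub_erase {m : ℕ} {G : Finset α} (hG : IsKSub E (m + 1) G) {a : α} (ha : a ∈ G) :
    IsKSub E m (G.erase a) :=
  ⟨subset_trans (Finset.erase_subset _ _) hG.1,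
   by rw [Finset.card_erase_of_mem ha, hG.2]; omega⟩

lemma isKSub_insert {m : ℕ} {G : Finset α} (hG : IsKSub E m G) (heE : e ∈ E) (he : e ∉ G) :
    IsKSub E (m + 1) (insert e G) :=
  ⟨Finset.insert_subset heE hG.1, by rw [Finset.card_insert_of_notMem he, hG.2]⟩

lemma idx_insert_self {G : Finset α} (he : e ∉ G) (hmin : ∀ b ∈ G, e ≤ b) :
    ((insert e G).sort (· ≤ ·)).idxOf e = 0 := by
  rw [Finset.sort_insert _ hmin he, List.idxOf_cons_self]

lemma idx_insert_ne {G : Finset α} (he : e ∉ G) (hmin : ∀ b ∈ G, e ≤ b) {a : α} (ha : a ∈ G) :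
    ((insert e G).sort (· ≤ ·)).idxOf a = (G.sort (· ≤ ·)).idxOf a + 1 := by
  rw [Finset.sort_insert _ hmin he, List.idxOf_cons_ne _ (by intro h; subst h; exact he ha)]

lemma idx_mem_zero {G : Finset α} (he : e ∈ G) (hmin : ∀ b ∈ G, e ≤ b) :
    ((G.sort (· ≤ ·))).idxOf e = 0 := by
  conv_lhs => rw [← Finset.insert_erase he]
  exact idx_insert_self (G := G.erase e) (Finset.notMem_erase _ _)
    (fun b hb => hmin b (Finset.mem_of_mem_erase hb))

lemma coreC1 {m : ℕ} {G : Finset α} (hG : IsKSub E m G) (heE : e ∈ E)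
    (hmin : ∀ b ∈ E, e ≤ b) (he : e ∉ G) :
    cD k E m (hC k E e m (Finsupp.single ⟨G, hG⟩ (1 : k))) =
      (Finsupp.single ⟨G, hG⟩ 1 : CMod k E m) +
        ∑ a ∈ G, ((-1 : k) ^ ((G.sort (· ≤ ·)).idxOf a + 1)) •
          bas k (IsKSub E m) (insert e (G.erase a)) := by
  have hminG : ∀ b ∈ G, e ≤ b := fun b hb => hmin b (hG.1 hb)
  rw [hC_single ⟨G, hG⟩, if_neg he, map_smul, cD_bas (isKSub_insert hG heE he),
    Finset.sum_insert he, idx_insert_self he hminG, Finset.erase_insert he]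
  rw [smul_add, smul_smul]
  have h1 : (-1 : k) * (-1 : k) ^ (0 + 1) = 1 := by norm_num
  rw [h1, one_smul, bas_pos _ hG]
  congr 1
  rw [Finset.smul_sum]
  apply Finset.sum_congr rfl
  intro a ha
  rw [idx_insert_ne he hminG ha, Finset.erase_insert_of_ne (by intro h; subst h; exact he ha), smul_smul]
  congr 1
  rw [pow_succ, pow_succ]
  ring

lemma coreC2 {m : ℕ} {G : Finset α} (hG : IsKSub E (m + 1) G) (heE : e ∈ E)
    (hmin : ∀ b ∈ E, e ≤ b) :
    hC k E e m (cD k E m (Finsupp.single ⟨G, hG⟩ (1 : k))) =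
      (if e ∈ G then (Finsupp.single ⟨G, hG⟩ 1 : CMod k E (m + 1))
       else ∑ a ∈ G, ((-1 : k) ^ ((G.sort (· ≤ ·)).idxOf a)) •
         bas k (IsKSub E (m + 1)) (insert e (G.erase a))) := by
  have hminG : ∀ b ∈ G, e ≤ b := fun b hb => hmin b (hG.1 hb)
  rw [cD_single ⟨G, hG⟩, map_sum]
  split_ifs with heG
  · rw [Finset.sum_eq_single_of_mem e heG ?side]
    · rw [map_smul, hC_bas (isKSub_erase hG heG),
        if_neg (Finset.notMem_erase _ _), idx_mem_zero heG hminG,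
        Finset.insert_erase heG, smul_smul]
      have h1 : (-1 : k) ^ (0 + 1) * (-1 : k) = 1 := by norm_num
      rw [h1, one_smul, bas_pos _ hG]
    · intro a ha hae
      rw [map_smul, hC_bas (isKSub_erase hG ha),
        if_pos (Finset.mem_erase.mpr ⟨fun h => hae h.symm, heG⟩), smul_zero]
  · apply Finset.sum_congr rfl
    intro a ha
    rw [map_smul, hC_bas (isKSub_erase hG ha),
      if_neg (fun h => heG (Finset.mem_of_mem_erase h)), smul_smul]
    congr 1
    rw [pow_succ]
    ring

lemma keyC {m : ℕ} (heE : e ∈ E) (hmin : ∀ b ∈ E, e ≤ b)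
    (q : {G : Finset α // IsKSub E (m + 1) G}) :
    cD k E (m + 1) (hC k E e (m + 1) (Finsupp.single q (1 : k))) +
      hC k E e m (cD k E m (Finsupp.single q (1 : k))) = Finsupp.single q 1 := by
  obtain ⟨G, hG⟩ := q
  by_cases heG : e ∈ G
  · rw [hC_single ⟨G, hG⟩, if_pos heG, map_zero, zero_add, coreC2 hG heE hmin, if_pos heG]
  · rw [coreC1 hG heE hmin heG, coreC2 hG heE hmin, if_neg heG, add_assoc,
      ← Finset.sum_add_distrib]
    have hzero : ∀ a ∈ G, ((-1 : k) ^ ((G.sort (· ≤ ·)).idxOf a + 1)) •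
          bas k (IsKSub E (m + 1)) (insert e (G.erase a)) +
        ((-1 : k) ^ ((G.sort (· ≤ ·)).idxOf a)) •
          bas k (IsKSub E (m + 1)) (insert e (G.erase a)) = 0 := by
      intro a ha
      rw [← add_smul]
      have : (-1 : k) ^ ((G.sort (· ≤ ·)).idxOf a + 1) +
          (-1 : k) ^ ((G.sort (· ≤ ·)).idxOf a) = 0 := by
        rw [pow_succ]; ring
      rw [this, zero_smul]
    rw [Finset.sum_congr rfl hzero, Finset.sum_const_zero, add_zero]

lemma htpyC {m : ℕ} (hE : E.Nonempty) (x : CMod k E (m + 1)) :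
    cD k E (m + 1) (hC k E (E.min' hE) (m + 1) x) + hC k E (E.min' hE) m (cD k E m x) = x := by
  have heE : E.min' hE ∈ E := E.min'_mem hE
  have hmin : ∀ b ∈ E, E.min' hE ≤ b := fun b hb => Finset.min'_le E b hb
  have hmaps : (cD k E (m + 1)).comp (hC k E (E.min' hE) (m + 1)) +
      (hC k E (E.min' hE) m).comp (cD k E m) = LinearMap.id := by
    apply Finsupp.lhom_ext
    intro q b
    have hb : (Finsupp.single q b : CMod k E (m + 1)) = b • Finsupp.single q 1 := by
      rw [Finsupp.smul_single, smul_eq_mul, mul_one]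
    rw [LinearMap.add_apply, LinearMap.comp_apply, LinearMap.comp_apply, LinearMap.id_apply, hb]
    simp only [map_smul]
    rw [← smul_add, keyC heE hmin q]
  calc cD k E (m + 1) (hC k E (E.min' hE) (m + 1) x) + hC k E (E.min' hE) m (cD k E m x)
      = ((cD k E (m + 1)).comp (hC k E (E.min' hE) (m + 1)) +
        (hC k E (E.min' hE) m).comp (cD k E m)) x := rfl
    _ = x := by rw [hmaps]; rfl

lemma htpyC0 (hE : E.Nonempty) (x : CMod k E 0) :
    cD k E 0 (hC k E (E.min' hE) 0 x) = x := by
  have heE : E.min' hE ∈ E := E.min'_mem hE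
  have hmin : ∀ b ∈ E, E.min' hE ≤ b := fun b hb => Finset.min'_le E b hb
  have hmaps : (cD k E 0).comp (hC k E (E.min' hE) 0) = LinearMap.id := by
    apply Finsupp.lhom_ext
    intro q b
    have hb : (Finsupp.single q b : CMod k E 0) = b • Finsupp.single q 1 := by
      rw [Finsupp.smul_single, smul_eq_mul, mul_one]
    rw [LinearMap.comp_apply, LinearMap.id_apply, hb]
    simp only [map_smul]
    congr 1
    obtain ⟨G, hG⟩ := q
    have hGe : G = ∅ := Finset.card_eq_zero.mp hG.2
    subst hGe
    have he : E.min' hE ∉ (∅ : Finset α) := Finset.notMem_empty _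
    rw [coreC1 hG heE hmin he]
    simp
  calc cD k E 0 (hC k E (E.min' hE) 0 x) = ((cD k E 0).comp (hC k E (E.min' hE) 0)) x := rfl
    _ = x := by rw [hmaps]; rfl

end CPart
section KPart
variable {k : Type} [Field k] {α : Type} [DecidableEq α] [LinearOrder α] {E : Finset α}

lemma singBlock_eq {G : Finset α} {n : ℕ} (h : n < G.card) :
    singBlock G n = {(G.sort (· ≤ ·))[n]'(by rwa [Finset.length_sort])} := by
  unfold singBlock
  rw [List.getElem?_eq_getElem (by rwa [Finset.length_sort])]
  rfl

lemma kt_lt {M : ℕ} {G : Finset α} (σ : Equiv.Perm (Fin M)) {j : Fin (M + 1)} (hj : j.val < M) :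
    kapTuple6 E G σ j = singBlock G ((σ ⟨j.val, hj⟩).val) := by
  unfold kapTuple6 permVal
  rw [if_neg (by omega), dif_pos hj]

lemma kt_at {M : ℕ} {G : Finset α} (σ : Equiv.Perm (Fin M)) {j : Fin (M + 1)} {n : ℕ}
    (hn : n < M) (hj : j.val = n) :
    kapTuple6 E G σ j = singBlock G ((σ ⟨n, hn⟩).val) := by
  subst hj
  exact kt_lt σ hn

lemma kt_last {M : ℕ} {G : Finset α} (σ : Equiv.Perm (Fin M)) {j : Fin (M + 1)} (hj : j.val = M) :
    kapTuple6 E G σ j = E \ G := if_pos hj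

lemma getInj {G : Finset α} {u v : ℕ} (hu : u < (G.sort (· ≤ ·)).length)
    (hv : v < (G.sort (· ≤ ·)).length)
    (he : (G.sort (· ≤ ·))[u] = (G.sort (· ≤ ·))[v]) : u = v := by
  have h1 := List.Nodup.idxOf_getElem (Finset.sort_nodup G (· ≤ ·)) u hu
  have h2 := List.Nodup.idxOf_getElem (Finset.sort_nodup G (· ≤ ·)) v hv
  rw [he] at h1
  omega

lemma isLDecomp_kap {M : ℕ} {G : Finset α} (hG : IsKSub E M G) (σ : Equiv.Perm (Fin M)) :
    IsLDecomp E (r := M) (kapTuple6 E G σ) := by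
  have hlen : (G.sort (· ≤ ·)).length = M := by rw [Finset.length_sort, hG.2]
  have hmem : ∀ (n : ℕ) (h : n < M), (G.sort (· ≤ ·))[n]'(by omega) ∈ G := fun n h =>
    (Finset.mem_sort _).mp (List.getElem_mem _)
  refine ⟨?_, ?_, ?_⟩
  · intro j hj
    rw [kt_lt σ hj, singBlock_eq (by rw [hG.2]; exact (σ _).isLt)]
    simp
  · intro i j hij
    have hvij : i.val ≠ j.val := fun e => hij (Fin.ext e)
    rcases Nat.lt_or_ge i.val M with hi | hi
    · rcases Nat.lt_or_ge j.val M with hj | hj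
      · rw [kt_lt σ hi, kt_lt σ hj, singBlock_eq (by rw [hG.2]; exact (σ _).isLt),
          singBlock_eq (by rw [hG.2]; exact (σ _).isLt)]
        rw [Finset.disjoint_singleton]
        intro he
        have := getInj (by omega) (by omega) he
        have h2 : σ ⟨i.val, hi⟩ = σ ⟨j.val, hj⟩ := Fin.ext this
        have h3 : (⟨i.val, hi⟩ : Fin M).val = (⟨j.val, hj⟩ : Fin M).val :=
          congrArg Fin.val (σ.injective h2)
        exact hvij h3
      · rw [kt_lt σ hi, kt_last σ (by omega), singBlock_eq (by rw [hG.2]; exact (σ _).isLt)]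
        rw [Finset.disjoint_singleton_left, Finset.mem_sdiff]
        intro hc
        exact hc.2 (hmem _ (σ ⟨i.val, hi⟩).isLt)
    · rcases Nat.lt_or_ge j.val M with hj | hj
      · rw [kt_last σ (by omega), kt_lt σ hj, singBlock_eq (by rw [hG.2]; exact (σ _).isLt)]
        rw [Finset.disjoint_singleton_right, Finset.mem_sdiff]
        intro hc
        exact hc.2 (hmem _ (σ ⟨j.val, hj⟩).isLt)
      · exfalso
        have := i.isLt
        have := j.isLt
        omega
  · have hsub : E ⊆ Finset.univ.sup (kapTuple6 E G σ) := by
      intro x hx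
      by_cases hxG : x ∈ G
      · have hxl : x ∈ G.sort (· ≤ ·) := (Finset.mem_sort _).mpr hxG
        obtain ⟨n, hn, hnx⟩ := List.mem_iff_getElem.mp hxl
        have hnM : n < M := by omega
        refine Finset.mem_sup.mpr ⟨⟨(σ.symm ⟨n, hnM⟩).val, by omega⟩, Finset.mem_univ _, ?_⟩
        rw [kt_lt σ (show ((⟨(σ.symm ⟨n, hnM⟩).val, _⟩ : Fin (M + 1)).val) < M from
          (σ.symm ⟨n, hnM⟩).isLt)]
        have he : σ ⟨(σ.symm ⟨n, hnM⟩).val, (σ.symm ⟨n, hnM⟩).isLt⟩ = ⟨n, hnM⟩ := by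
          rw [Fin.eta]
          exact σ.apply_symm_apply _
        rw [he, singBlock_eq (by rw [hG.2]; exact hnM)]
        simp only [Finset.mem_singleton]
        exact hnx.symm
      · refine Finset.mem_sup.mpr ⟨⟨M, by omega⟩, Finset.mem_univ _, ?_⟩
        rw [kt_last σ rfl, Finset.mem_sdiff]
        exact ⟨hx, hxG⟩
    apply le_antisymm
    · apply Finset.sup_le
      intro j _
      rcases Nat.lt_or_ge j.val M with hj | hj
      · rw [kt_lt σ hj, singBlock_eq (by rw [hG.2]; exact (σ _).isLt)]
        exact Finset.singleton_subset_iff.mpr (hG.1 (hmem _ (σ ⟨j.val, hj⟩).isLt))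
      · rw [kt_last σ (by omega)]
        exact Finset.sdiff_subset
    · exact hsub

lemma kap6_single {M : ℕ} (q : {G : Finset α // IsKSub E M G}) :
    kap6 k E M (Finsupp.single q (1 : k)) =
      ∑ σ : Equiv.Perm (Fin M), ((Equiv.Perm.sign σ : ℤ) : k) •
        bas k (IsLDecomp E (r := M)) (kapTuple6 E q.val σ) := by
  rw [kap6, Finsupp.lsum_single, LinearMap.toSpanSingleton_apply, one_smul]

lemma kap6_bas {M : ℕ} {G : Finset α} (hG : IsKSub E M G) :
    kap6 k E M (bas k (IsKSub E M) G) =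
      ∑ σ : Equiv.Perm (Fin M), ((Equiv.Perm.sign σ : ℤ) : k) •
        bas k (IsLDecomp E (r := M)) (kapTuple6 E G σ) := by
  rw [bas_pos _ hG, kap6_single ⟨G, hG⟩]

/-! permutation combinatorics -/

def castLtEquiv (m : ℕ) : Fin m ≃ {j : Fin (m + 1) // j.val < m} where
  toFun i := ⟨i.castSucc, by simpa using i.isLt⟩
  invFun j := ⟨j.1.val, j.2⟩
  left_inv i := Fin.ext rfl
  right_inv j := Subtype.ext (Fin.ext rfl)

def extLast {m : ℕ} (τ : Equiv.Perm (Fin m)) : Equiv.Perm (Fin (m + 1)) :=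
  τ.extendDomain (castLtEquiv m)

lemma extLast_castSucc {m : ℕ} (τ : Equiv.Perm (Fin m)) (i : Fin m) :
    extLast τ i.castSucc = (τ i).castSucc :=
  Equiv.Perm.extendDomain_apply_image τ (castLtEquiv m) i

lemma extLast_last {m : ℕ} (τ : Equiv.Perm (Fin m)) : extLast τ (Fin.last m) = Fin.last m :=
  Equiv.Perm.extendDomain_apply_not_subtype τ _ (by simp)

def rho {m : ℕ} (p : Fin (m + 1)) : Equiv.Perm (Fin (m + 1)) :=
  (finSuccEquiv' (Fin.last m)).trans (finSuccEquiv' p).symm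

lemma rho_last {m : ℕ} (p : Fin (m + 1)) : rho p (Fin.last m) = p := by
  unfold rho
  rw [Equiv.trans_apply, finSuccEquiv'_at, finSuccEquiv'_symm_none]

lemma rho_castSucc {m : ℕ} (p : Fin (m + 1)) (i : Fin m) : rho p i.castSucc = p.succAbove i := by
  unfold rho
  rw [Equiv.trans_apply, ← Fin.succAbove_last, finSuccEquiv'_succAbove, finSuccEquiv'_symm_some]

lemma rho_last_self {m : ℕ} : rho (Fin.last m) = 1 := by
  apply Equiv.ext
  intro j
  refine Fin.lastCases ?_ ?_ j
  · rw [rho_last]; rfl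
  · intro i
    rw [rho_castSucc, Fin.succAbove_last]; rfl

lemma rho_step {m : ℕ} (i : Fin m) :
    rho i.castSucc = Equiv.swap i.castSucc i.succ * rho i.succ := by
  apply Equiv.ext
  intro j
  refine Fin.lastCases ?_ ?_ j
  · rw [rho_last, Equiv.Perm.mul_apply, rho_last, Equiv.swap_apply_right]
  · intro u
    rw [rho_castSucc, Equiv.Perm.mul_apply, rho_castSucc]
    rcases Nat.lt_trichotomy u.val i.val with h | h | h
    · rw [Fin.succAbove_of_castSucc_lt _ _ (by rw [Fin.lt_def]; simpa using h),
        Fin.succAbove_of_castSucc_lt _ _ (by rw [Fin.lt_def]; simp; omega),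
        Equiv.swap_apply_of_ne_of_ne (by rw [ne_eq, Fin.ext_iff]; simp; omega)
          (by rw [ne_eq, Fin.ext_iff]; simp; omega)]
    · have : u = i := Fin.ext h
      subst this
      rw [Fin.succAbove_of_le_castSucc _ _ (le_refl _),
        Fin.succAbove_of_castSucc_lt _ _ (by rw [Fin.lt_def]; simp),
        Equiv.swap_apply_left]
    · rw [Fin.succAbove_of_le_castSucc _ _ (by rw [Fin.le_def]; simp; omega),
        Fin.succAbove_of_le_castSucc _ _ (by rw [Fin.le_def]; simp; omega),
        Equiv.swap_apply_of_ne_of_ne (by rw [ne_eq, Fin.ext_iff]; simp; omega)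
          (by rw [ne_eq, Fin.ext_iff]; simp; omega)]

lemma sign_rho {m : ℕ} (p : Fin (m + 1)) :
    ((Equiv.Perm.sign (rho p) : ℤˣ) : ℤ) = (-1) ^ (m - p.val) := by
  induction p using Fin.reverseInduction with
  | last =>
    rw [rho_last_self]
    simp
  | cast i ih =>
    rw [rho_step, Equiv.Perm.sign_mul,
      Equiv.Perm.sign_swap (by rw [ne_eq, Fin.ext_iff]; simp)]
    push_cast
    rw [ih]
    have h1 : m - (i.castSucc).val = (m - (i.succ).val) + 1 := by
      have := i.isLt
      simp only [Fin.coe_castSucc, Fin.val_succ]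
      omega
    rw [h1, pow_succ]
    ring

def Phi {m : ℕ} (x : Fin (m + 1) × Equiv.Perm (Fin m)) : Equiv.Perm (Fin (m + 1)) :=
  rho x.1 * extLast x.2

lemma Phi_last {m : ℕ} (p : Fin (m + 1)) (τ : Equiv.Perm (Fin m)) :
    Phi (p, τ) (Fin.last m) = p := by
  unfold Phi
  rw [Equiv.Perm.mul_apply, extLast_last, rho_last]

lemma Phi_castSucc {m : ℕ} (p : Fin (m + 1)) (τ : Equiv.Perm (Fin m)) (i : Fin m) :
    Phi (p, τ) i.castSucc = p.succAbove (τ i) := by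
  unfold Phi
  rw [Equiv.Perm.mul_apply, extLast_castSucc, rho_castSucc]

lemma sign_Phi {m : ℕ} (p : Fin (m + 1)) (τ : Equiv.Perm (Fin m)) :
    ((Equiv.Perm.sign (Phi (p, τ)) : ℤˣ) : ℤ) =
      (-1) ^ (m - p.val) * ((Equiv.Perm.sign τ : ℤˣ) : ℤ) := by
  unfold Phi
  rw [Equiv.Perm.sign_mul]
  push_cast
  rw [sign_rho, extLast, Equiv.Perm.sign_extendDomain]

lemma Phi_bij {m : ℕ} : Function.Bijective (Phi (m := m)) := by
  rw [Fintype.bijective_iff_injective_and_card]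
  constructor
  · rintro ⟨p, τ⟩ ⟨p', τ'⟩ h
    have hp : p = p' := by rw [← Phi_last p τ, ← Phi_last p' τ', h]
    subst hp
    have hτ : τ = τ' := by
      apply Equiv.ext
      intro i
      apply Fin.succAbove_right_injective (p := p)
      rw [← Phi_castSucc p τ i, ← Phi_castSucc p τ' i, h]
    rw [hτ]
  · rw [Fintype.card_prod, Fintype.card_perm, Fintype.card_perm, Fintype.card_fin,
      Fintype.card_fin, Nat.factorial_succ]

/-! erasing an element of `G` -/

lemma succAbove_val {m : ℕ} (p : Fin (m + 1)) (i : Fin m) :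
    (p.succAbove i).val = if i.val < p.val then i.val else i.val + 1 := by
  rcases Nat.lt_or_ge i.val p.val with h | h
  · rw [if_pos h, Fin.succAbove_of_castSucc_lt _ _ (by rw [Fin.lt_def]; simpa using h)]
    rfl
  · rw [if_neg (by omega), Fin.succAbove_of_le_castSucc _ _ (by rw [Fin.le_def]; simpa using h)]
    rfl

lemma sort_erase_idx {G : Finset α} {a : α} (haG : a ∈ G) :
    (G.erase a).sort (· ≤ ·) = (G.sort (· ≤ ·)).eraseIdx ((G.sort (· ≤ ·)).idxOf a) := by
  have hal : a ∈ G.sort (· ≤ ·) := (Finset.mem_sort _).mpr haG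
  have hidx : (G.sort (· ≤ ·)).idxOf a < (G.sort (· ≤ ·)).length :=
    List.idxOf_lt_length_iff.mpr hal
  apply List.Perm.eq_of_pairwise' (Finset.pairwise_sort _ _)
    (List.Pairwise.sublist (List.eraseIdx_sublist _ _) (Finset.pairwise_sort G (· ≤ ·))) ?_
  have h1 : ((G.erase a).sort (· ≤ ·)).Perm ((G.sort (· ≤ ·)).erase a) := by
    rw [← Multiset.coe_eq_coe, ← Multiset.coe_erase, Finset.sort_eq, Finset.sort_eq]
    exact Finset.erase_val _ _
  have h2 := List.erase_getElem (l := G.sort (· ≤ ·)) (i := (G.sort (· ≤ ·)).idxOf a) hidx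
  rw [List.getElem_idxOf hidx] at h2
  exact h1.trans h2

lemma length_sort_erase {G : Finset α} {M : ℕ} (hG : G.card = M + 1) {a : α} (haG : a ∈ G) :
    ((G.erase a).sort (· ≤ ·)).length = M := by
  rw [Finset.length_sort, Finset.card_erase_of_mem haG, hG]
  omega

lemma singBlock_erase {G : Finset α} {M : ℕ} (hG : G.card = M + 1) {a : α} (haG : a ∈ G)
    (p : Fin (M + 1)) (hidx : (G.sort (· ≤ ·)).idxOf a = p.val) (i : Fin M) :
    singBlock (G.erase a) i.val = singBlock G ((p.succAbove i).val) := by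
  have hlen : (G.sort (· ≤ ·)).length = M + 1 := by rw [Finset.length_sort, hG]
  have hcard : (G.erase a).card = M := by
    rw [Finset.card_erase_of_mem haG, hG]
    omega
  rw [singBlock_eq (show i.val < (G.erase a).card by rw [hcard]; exact i.isLt),
    singBlock_eq (show (p.succAbove i).val < G.card by rw [hG]; exact (p.succAbove i).isLt)]
  congr 1
  have h2 : ((G.erase a).sort (· ≤ ·))[i.val]'(by rw [length_sort_erase hG haG]; exact i.isLt) =
      ((G.sort (· ≤ ·)).eraseIdx p.val)[i.val]'(by
        rw [← hidx, ← sort_erase_idx haG, length_sort_erase hG haG]; exact i.isLt) := by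
    simp only [sort_erase_idx haG, hidx]
  rw [h2, List.getElem_eraseIdx]
  rcases Nat.lt_or_ge i.val p.val with h | h
  · rw [dif_pos h]
    have hv : (p.succAbove i).val = i.val := by rw [succAbove_val, if_pos h]
    simp only [hv]
  · rw [dif_neg (by omega)]
    have hv : (p.succAbove i).val = i.val + 1 := by rw [succAbove_val, if_neg (by omega)]
    simp only [hv]

end KPart
section KPart2
variable {k : Type} [Field k] {α : Type} [DecidableEq α] [LinearOrder α] {E : Finset α}

lemma merge_kt_swap {m : ℕ} {G : Finset α} (σ : Equiv.Perm (Fin (m + 1))) {i : ℕ} (hi : i < m) :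
    merge i (kapTuple6 E G (σ * Equiv.swap (⟨i, by omega⟩ : Fin (m + 1)) ⟨i + 1, by omega⟩)) =
      merge i (kapTuple6 E G σ) := by
  funext j
  have hj1 := j.isLt
  unfold merge
  split_ifs with h1 h2
  · rw [kt_at _ (show j.val < m + 1 by omega) (by simp),
      kt_at σ (show j.val < m + 1 by omega) (by simp)]
    have he : (σ * Equiv.swap (⟨i, by omega⟩ : Fin (m + 1)) ⟨i + 1, by omega⟩)
        ⟨j.val, by omega⟩ = σ ⟨j.val, by omega⟩ := by
      rw [Equiv.Perm.mul_apply, Equiv.swap_apply_of_ne_of_ne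
        (by rw [ne_eq, Fin.ext_iff]; simp; omega) (by rw [ne_eq, Fin.ext_iff]; simp; omega)]
    rw [he]
  · rw [kt_at _ (show i < m + 1 by omega) (by simp [h2]),
      kt_at _ (show i + 1 < m + 1 by omega) (by simp [h2]),
      kt_at σ (show i < m + 1 by omega) (by simp [h2]),
      kt_at σ (show i + 1 < m + 1 by omega) (by simp [h2])]
    rw [Equiv.Perm.mul_apply, Equiv.Perm.mul_apply, Equiv.swap_apply_left,
      Equiv.swap_apply_right, Finset.union_comm]
  · rcases Nat.lt_or_ge (j.val + 1) (m + 1) with h3 | h3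
    · rw [kt_at _ h3 (by simp), kt_at σ h3 (by simp)]
      have he : (σ * Equiv.swap (⟨i, by omega⟩ : Fin (m + 1)) ⟨i + 1, by omega⟩)
          ⟨j.val + 1, h3⟩ = σ ⟨j.val + 1, h3⟩ := by
        rw [Equiv.Perm.mul_apply, Equiv.swap_apply_of_ne_of_ne
          (by rw [ne_eq, Fin.ext_iff]; simp; omega) (by rw [ne_eq, Fin.ext_iff]; simp; omega)]
      rw [he]
    · rw [kt_last _ (by simp only [Fin.val_succ]; omega),
        kt_last σ (by simp only [Fin.val_succ]; omega)]

lemma kap_cancel {m : ℕ} {G : Finset α} (hG : IsKSub E (m + 1) G) {i : ℕ} (hi : i < m) :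
    ∑ σ : Equiv.Perm (Fin (m + 1)), ((Equiv.Perm.sign σ : ℤ) : k) •
      (((-1 : k) ^ (i + 1)) • bas k (IsLDecomp E (r := m)) (merge i (kapTuple6 E G σ))) = 0 := by
  refine Finset.sum_involution
    (fun σ _ => σ * Equiv.swap (⟨i, by omega⟩ : Fin (m + 1)) ⟨i + 1, by omega⟩)
    ?_ ?_ ?_ ?_
  · intro σ _
    rw [merge_kt_swap σ hi, Equiv.Perm.sign_mul,
      Equiv.Perm.sign_swap (by rw [ne_eq, Fin.ext_iff]; simp)]
    rw [smul_smul, smul_smul, ← add_smul]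
    have hc : ((Equiv.Perm.sign σ : ℤ) : k) * (-1 : k) ^ (i + 1) +
        (((((Equiv.Perm.sign σ) * (-1) : ℤˣ) : ℤ) : k) * (-1 : k) ^ (i + 1)) = 0 := by
      push_cast [Units.val_mul]
      ring
    rw [hc, zero_smul]
  · intro σ _ _
    intro hc
    have h2 := congrArg (fun π : Equiv.Perm (Fin (m + 1)) => π ⟨i, by omega⟩) hc
    simp only [Equiv.Perm.mul_apply, Equiv.swap_apply_left] at h2
    have h3 := σ.injective h2
    rw [Fin.ext_iff] at h3
    simp at h3
  · intro σ _
    exact Finset.mem_univ _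
  · intro σ _
    simp only [mul_assoc, Equiv.swap_mul_self, mul_one]

lemma merge_kt_last {m : ℕ} {G : Finset α} (hG : IsKSub E (m + 1) G) (p : Fin (m + 1))
    (τ : Equiv.Perm (Fin m)) {a : α} (haG : a ∈ G)
    (hidx : (G.sort (· ≤ ·)).idxOf a = p.val) :
    merge m (kapTuple6 E G (Phi (p, τ))) = kapTuple6 E (G.erase a) τ := by
  have hlen : (G.sort (· ≤ ·)).length = m + 1 := by rw [Finset.length_sort, hG.2]
  have hval : (G.sort (· ≤ ·))[p.val]'(by omega) = a := by
    have h0 := List.getElem_idxOf (xs := G.sort (· ≤ ·)) (x := a) (by rw [hidx]; omega)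
    simp only [hidx] at h0
    exact h0
  funext j
  unfold merge
  split_ifs with h1 h2
  · rw [kt_at (Phi (p, τ)) (show j.val < m + 1 by omega) (by simp),
      kt_at τ h1 rfl]
    have hφ : Phi (p, τ) ⟨j.val, by omega⟩ = p.succAbove (τ ⟨j.val, h1⟩) :=
      Phi_castSucc p τ ⟨j.val, h1⟩
    rw [hφ]
    exact (singBlock_erase hG.2 haG p hidx (τ ⟨j.val, h1⟩)).symm
  · rw [kt_at (Phi (p, τ)) (show m < m + 1 by omega) (by simp [h2]),
      kt_last (Phi (p, τ)) (by simp [h2]),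
      kt_last τ h2]
    have hP : Phi (p, τ) ⟨m, by omega⟩ = p := Phi_last p τ
    rw [hP, singBlock_eq (show p.val < G.card by rw [hG.2]; exact p.isLt), hval]
    ext x
    simp only [Finset.mem_union, Finset.mem_singleton, Finset.mem_sdiff, Finset.mem_erase]
    constructor
    · rintro (rfl | ⟨hxE, hxG⟩)
      · exact ⟨hG.1 haG, fun hh => hh.1 rfl⟩
      · exact ⟨hxE, fun hh => hxG hh.2⟩
    · rintro ⟨hxE, hh⟩
      by_cases hxa : x = a
      · exact Or.inl hxa
      · exact Or.inr ⟨hxE, fun hxG => hh ⟨hxa, hxG⟩⟩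
  · exfalso
    have := j.isLt
    omega

lemma keyK {m : ℕ} (q : {G : Finset α // IsKSub E (m + 1) G}) :
    ntD k E m (kap6 k E (m + 1) (Finsupp.single q (1 : k))) =
      kap6 k E m (cD k E m (Finsupp.single q (1 : k))) := by
  obtain ⟨G, hG⟩ := q
  have hlen : (G.sort (· ≤ ·)).length = m + 1 := by rw [Finset.length_sort, hG.2]
  rw [kap6_single ⟨G, hG⟩, map_sum, cD_single ⟨G, hG⟩, map_sum]
  have hL1 : ∀ σ : Equiv.Perm (Fin (m + 1)),
      ntD k E m (((Equiv.Perm.sign σ : ℤ) : k) •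
          bas k (IsLDecomp E (r := m + 1)) (kapTuple6 E G σ))
        = ∑ i ∈ Finset.range (m + 1), ((Equiv.Perm.sign σ : ℤ) : k) •
            (((-1 : k) ^ (i + 1)) • bas k (IsLDecomp E (r := m)) (merge i (kapTuple6 E G σ))) := by
    intro σ
    rw [map_smul, ntD_bas (isLDecomp_kap hG σ), Finset.smul_sum]
  rw [Finset.sum_congr rfl fun σ _ => hL1 σ, Finset.sum_comm, Finset.sum_range_succ,
    Finset.sum_eq_zero (fun i hi => kap_cancel hG (Finset.mem_range.mp hi)), zero_add]
  have hre := Fintype.sum_bijective (Phi (m := m)) Phi_bij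
    (fun x : Fin (m + 1) × Equiv.Perm (Fin m) =>
      ((Equiv.Perm.sign (Phi x) : ℤ) : k) • (((-1 : k) ^ (m + 1)) •
        bas k (IsLDecomp E (r := m)) (merge m (kapTuple6 E G (Phi x)))))
    (fun σ => ((Equiv.Perm.sign σ : ℤ) : k) • (((-1 : k) ^ (m + 1)) •
        bas k (IsLDecomp E (r := m)) (merge m (kapTuple6 E G σ))))
    (fun x => rfl)
  rw [← hre, Fintype.sum_prod_type]
  have hR1 : ∀ a ∈ G,
      kap6 k E m (((-1 : k) ^ ((G.sort (· ≤ ·)).idxOf a + 1)) •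
          bas k (IsKSub E m) (G.erase a))
        = ∑ τ : Equiv.Perm (Fin m), ((-1 : k) ^ ((G.sort (· ≤ ·)).idxOf a + 1)) •
            (((Equiv.Perm.sign τ : ℤ) : k) •
              bas k (IsLDecomp E (r := m)) (kapTuple6 E (G.erase a) τ)) := by
    intro a ha
    rw [map_smul, kap6_bas (isKSub_erase hG ha), Finset.smul_sum]
  rw [Finset.sum_congr rfl hR1]
  refine Finset.sum_bij (fun (p : Fin (m + 1)) _ => (G.sort (· ≤ ·))[p.val]'(by omega))
    (fun p _ => (Finset.mem_sort _).mp (List.getElem_mem _))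
    (fun p _ p' _ he => Fin.ext (getInj (by omega) (by omega) he))
    (fun a ha => ⟨⟨(G.sort (· ≤ ·)).idxOf a, by
        rw [← hlen]
        exact List.idxOf_lt_length_iff.mpr ((Finset.mem_sort _).mpr ha)⟩,
      Finset.mem_univ _, List.getElem_idxOf _⟩)
    ?_
  intro p _
  have hplt : p.val < (G.sort (· ≤ ·)).length := by omega
  have haG : (G.sort (· ≤ ·))[p.val]'hplt ∈ G := (Finset.mem_sort _).mp (List.getElem_mem _)
  have hidx : (G.sort (· ≤ ·)).idxOf ((G.sort (· ≤ ·))[p.val]'hplt) = p.val :=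
    List.Nodup.idxOf_getElem (Finset.sort_nodup _ _) _ _
  refine Finset.sum_congr rfl fun τ _ => ?_
  rw [merge_kt_last hG p τ haG hidx, hidx, smul_smul, smul_smul]
  congr 1
  have hc : ((Equiv.Perm.sign (Phi (p, τ)) : ℤ) : k) =
      (-1 : k) ^ (m - p.val) * ((Equiv.Perm.sign τ : ℤ) : k) := by
    rw [sign_Phi]
    push_cast
    ring
  have h2 : (-1 : k) ^ (m - p.val) * (-1 : k) ^ (m + 1) = (-1 : k) ^ (p.val + 1) := by
    rw [← pow_add, show m - p.val + (m + 1) = 2 * (m - p.val) + (p.val + 1) by omega,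
      pow_add, pow_mul, neg_one_sq, one_pow, one_mul]
  calc ((Equiv.Perm.sign (Phi (p, τ)) : ℤ) : k) * (-1 : k) ^ (m + 1)
      = ((-1 : k) ^ (m - p.val) * (-1 : k) ^ (m + 1)) * ((Equiv.Perm.sign τ : ℤ) : k) := by
        rw [hc]; ring
    _ = (-1 : k) ^ (p.val + 1) * ((Equiv.Perm.sign τ : ℤ) : k) := by rw [h2]

lemma chainMap (E : Finset α) (m : ℕ) :
    (ntD k E m).comp (kap6 k E (m + 1)) = (kap6 k E m).comp (cD k E m) := by
  apply Finsupp.lhom_ext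
  intro q b
  have hb : (Finsupp.single q b : CMod k E (m + 1)) = b • Finsupp.single q 1 := by
    rw [Finsupp.smul_single, smul_eq_mul, mul_one]
  rw [LinearMap.comp_apply, LinearMap.comp_apply, hb]
  simp only [map_smul]
  rw [keyK q]

end KPart2

end OSK

/-- `κ` is a chain map, both complexes are exact (homology vanishes in every
degree `m ≥ 0`), and in particular `κ` is a quasi-isomorphism. -/
theorem oneSided_kap_quasiIso (k : Type) [Field k] (α : Type) [DecidableEq α]
    [LinearOrder α] (E : Finset α) (hE : E.Nonempty) :
    (∀ m : ℕ, (ntD k E m).comp (kap6 k E (m + 1)) = (kap6 k E m).comp (cD k E m)) ∧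
    ((∀ x : CMod k E 0, ∃ y : CMod k E 1, cD k E 0 y = x) ∧
      (∀ (m : ℕ) (x : CMod k E (m + 1)), cD k E m x = 0 →
        ∃ y : CMod k E (m + 2), cD k E (m + 1) y = x)) ∧
    ((∀ x : NtMod k E 0, ∃ y : NtMod k E 1, ntD k E 0 y = x) ∧
      (∀ (m : ℕ) (x : NtMod k E (m + 1)), ntD k E m x = 0 →
        ∃ y : NtMod k E (m + 2), ntD k E (m + 1) y = x)) := by
  refine ⟨fun m => OSK.chainMap E m, ⟨?_, ?_⟩, ⟨?_, ?_⟩⟩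
  · intro x
    exact ⟨OSK.hC k E (E.min' hE) 0 x, OSK.htpyC0 hE x⟩
  · intro m x hx
    refine ⟨OSK.hC k E (E.min' hE) (m + 1) x, ?_⟩
    have h := OSK.htpyC hE x
    rwa [hx, map_zero, add_zero] at h
  · intro x
    exact ⟨OSK.hN k E 0 x, OSK.htpyN0 hE x⟩
  · intro m x hx
    refine ⟨OSK.hN k E (m + 1) x, ?_⟩
    have h := OSK.htpyN m x
    rwa [hx, map_zero, add_zero] at h
end

section
/- Let P be a finite partially ordered set with n ≥ 1 elements and let m be a maximal element of P. For an order-preserving bijection f : P ∖ {m} → {1, …, n−1} and an integer i with max{ f(p) : p ∈ P, p < m } < i ≤ n (the maximum over the empty set being 0), define f^i : P → {1, …, n} by f^i(m) = i, f^i(x) = f(x) if f(x) < i, and f^i(x) = f(x) + 1 if f(x) ≥ i. Then: (1) each such f^i is an order-preserving bijection P → {1, …, n}, and the assignment (f, i) ↦ f^i is a bijection onto the set of all order-preserving bijections P → {1, …, n}; (2) if x_1, …, x_n is a fixed enumeration of P with x_n = m, and ε(g) denotes the signature of the permutation j ↦ g(x_j) for an order-preserving bijection g : P → {1,…,n} (respectively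 j ↦ f(x_j), j ≤ n−1, for f on P ∖ {m}), then ε(f^i) = (−1)^{n−i} ε(f). -/
/- STATEMENT 10: for a finite poset `P` with `n ≥ 1` elements and a maximal element
`m`, the assignment `(f, i) ↦ f^i` — where `f : P ∖ {m} → {1,…,n−1}` is an
order-preserving bijection (linear extension), `max{f(p) : p < m} < i ≤ n`, and
`f^i(m) = i`, `f^i(x) = f(x)` if `f(x) < i`, `f^i(x) = f(x) + 1` if `f(x) ≥ i` — is
a bijection onto the set of order-preserving bijections `P → {1,…,n}`; moreover,
with respect to a fixed enumeration `x_1, …, x_n` of `P` with `x_n = m`, the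
signatures satisfy `ε(f^i) = (−1)^{n−i} ε(f)`. -/

open Finset

/-- `f` is an order-preserving bijection (linear extension) from the finite poset
`β` onto the finite set `s ⊆ ℕ` (with its usual order). -/
def OPBij {β : Type} [Preorder β] (f : β → ℕ) (s : Finset ℕ) : Prop :=
  Monotone f ∧ Function.Injective f ∧ (∀ x, f x ∈ s) ∧ ∀ y ∈ s, ∃ x, f x = y

/-- The extension `f^i : P → ℕ` of `f : P ∖ {m} → ℕ`: `f^i(m) = i`,
`f^i(x) = f(x)` if `f(x) < i`, and `f^i(x) = f(x) + 1` if `f(x) ≥ i`. -/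
def extMap {P : Type} [DecidableEq P] (m : P) (f : {x : P // x ≠ m} → ℕ) (i : ℕ)
    (x : P) : ℕ :=
  if h : x = m then i
  else if f ⟨x, h⟩ < i then f ⟨x, h⟩ else f ⟨x, h⟩ + 1

/-- `max{f(p) : p ∈ P, p < m}`, the maximum over the empty set being `0`. -/
def lowerBndSup {P : Type} [PartialOrder P] [Fintype P] [DecidableEq P]
    [DecidableRel ((· < ·) : P → P → Prop)] (m : P) (f : {x : P // x ≠ m} → ℕ) : ℕ :=
  (Finset.univ.filter (fun x : {x : P // x ≠ m} => (x : P) < m)).sup f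

/-- The signature `ε(g) = (−1)^{#inversions}` of a finite sequence `g` of natural
numbers (for an injective sequence this is the signature of the associated
permutation). -/
def epsN {r : ℕ} (g : Fin r → ℕ) : ℤ :=
  (-1 : ℤ) ^ (Finset.univ.filter
    (fun q : Fin r × Fin r => q.1 < q.2 ∧ g q.2 < g q.1)).card

/-- The sequence `j ↦ f(x_j)`, `j ≤ n − 1`, associated to `f : P ∖ {m} → ℕ` and an
enumeration `x` of `P` whose last value is `m` (the junk value `0` is never used,
since `x_j ≠ m` for `j ≤ n − 1`). -/
def restrictSeq {P : Type} [DecidableEq P] {n : ℕ} (m : P) (x : Fin n → P)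
    (f : {y : P // y ≠ m} → ℕ) (j : Fin (n - 1)) : ℕ :=
  if h : x (Fin.castLE (Nat.sub_le n 1) j) = m then 0
  else f ⟨x (Fin.castLE (Nat.sub_le n 1) j), h⟩

lemma extMap_m {P : Type} [DecidableEq P] (m : P) (f : {x : P // x ≠ m} → ℕ) (i : ℕ) :
    extMap m f i m = i := dif_pos rfl

lemma extMap_ne {P : Type} [DecidableEq P] (m : P) (f : {x : P // x ≠ m} → ℕ) (i : ℕ)
    (z : {x : P // x ≠ m}) :
    extMap m f i (z : P) = if f z < i then f z else f z + 1 := by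
  rw [extMap, dif_neg z.2]

lemma tau_lt {i a b : ℕ} :
    ((if a < i then a else a + 1) < (if b < i then b else b + 1)) ↔ a < b := by
  split_ifs <;> omega

lemma lbs_lt {P : Type} [PartialOrder P] [Fintype P] [DecidableEq P]
    [DecidableRel ((· < ·) : P → P → Prop)] {m : P} {f : {x : P // x ≠ m} → ℕ}
    {i : ℕ} (h : lowerBndSup m f < i) (z : {x : P // x ≠ m}) (hz : (z : P) < m) :
    f z < i :=
  lt_of_le_of_lt (Finset.le_sup (by simp [hz])) h

lemma extMap_OPBij {P : Type} [PartialOrder P] [Fintype P] [DecidableEq P]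
    [DecidableRel ((· < ·) : P → P → Prop)] {n : ℕ} (hn : 1 ≤ n) (m : P)
    (hm : IsMax m) (f : {x : P // x ≠ m} → ℕ) (hf : OPBij f (Finset.Icc 1 (n - 1)))
    (i : ℕ) (hi1 : lowerBndSup m f < i) (hi2 : i ≤ n) :
    OPBij (extMap m f i) (Finset.Icc 1 n) := by
  obtain ⟨fmono, finj, fmem, fsurj⟩ := hf
  have hfm : ∀ x : {x : P // x ≠ m}, 1 ≤ f x ∧ f x ≤ n - 1 := fun x => by
    have := fmem x; simpa [Finset.mem_Icc] using this
  have hi0 : 1 ≤ i := by omega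
  refine ⟨?_, ?_, ?_, ?_⟩
  · -- monotone
    intro a b hab
    by_cases ha : a = m
    · have hb : b = m := le_antisymm (hm (ha ▸ hab)) (ha ▸ hab)
      rw [ha, hb]
    · by_cases hb : b = m
      · rw [hb, extMap_m, show a = ((⟨a, ha⟩ : {x : P // x ≠ m}) : P) from rfl, extMap_ne]
        have : f ⟨a, ha⟩ < i := lbs_lt hi1 ⟨a, ha⟩ (lt_of_le_of_ne (hb ▸ hab) ha)
        split_ifs <;> omega
      · rw [show a = ((⟨a, ha⟩ : {x : P // x ≠ m}) : P) from rfl, extMap_ne,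
          show b = ((⟨b, hb⟩ : {x : P // x ≠ m}) : P) from rfl, extMap_ne]
        have : f ⟨a, ha⟩ ≤ f ⟨b, hb⟩ := fmono (show (⟨a, ha⟩ : {x : P // x ≠ m}) ≤ ⟨b, hb⟩ from hab)
        split_ifs <;> omega
  · -- injective
    intro a b hab
    by_cases ha : a = m <;> by_cases hb : b = m
    · rw [ha, hb]
    · exfalso
      rw [ha, extMap_m, show b = ((⟨b, hb⟩ : {x : P // x ≠ m}) : P) from rfl, extMap_ne] at hab
      split_ifs at hab <;> omega
    · exfalso
      rw [hb, extMap_m, show a = ((⟨a, ha⟩ : {x : P // x ≠ m}) : P) from rfl, extMap_ne] at hab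
      split_ifs at hab <;> omega
    · rw [show a = ((⟨a, ha⟩ : {x : P // x ≠ m}) : P) from rfl, extMap_ne,
        show b = ((⟨b, hb⟩ : {x : P // x ≠ m}) : P) from rfl, extMap_ne] at hab
      have : f ⟨a, ha⟩ = f ⟨b, hb⟩ := by split_ifs at hab <;> omega
      exact congrArg Subtype.val (finj this)
  · -- mem
    intro x
    simp only [Finset.mem_Icc]
    by_cases hx : x = m
    · rw [hx, extMap_m]; omega
    · rw [show x = ((⟨x, hx⟩ : {y : P // y ≠ m}) : P) from rfl, extMap_ne]
      have := hfm ⟨x, hx⟩; split_ifs <;> omega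
  · -- surjective
    intro y hy
    simp only [Finset.mem_Icc] at hy
    rcases lt_trichotomy y i with h | h | h
    · obtain ⟨z, hz⟩ := fsurj y (by simp only [Finset.mem_Icc]; omega)
      exact ⟨z, by rw [extMap_ne, hz, if_pos h]⟩
    · exact ⟨m, by rw [extMap_m, h]⟩
    · obtain ⟨z, hz⟩ := fsurj (y - 1) (by simp only [Finset.mem_Icc]; omega)
      exact ⟨z, by rw [extMap_ne, hz, if_neg (by omega)]; omega⟩

/-- Insertion of a maximal element into linear extensions: `(f, i) ↦ f^i` is a
bijection onto the linear extensions of `P`, and `ε(f^i) = (−1)^{n−i} ε(f)`. -/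
theorem linearExtension_insertion (P : Type) [PartialOrder P] [Fintype P]
    [DecidableEq P] [DecidableRel ((· < ·) : P → P → Prop)]
    (n : ℕ) (hn : 1 ≤ n) (hcard : Fintype.card P = n) (m : P) (hm : IsMax m) :
    (∀ f : {x : P // x ≠ m} → ℕ, OPBij f (Finset.Icc 1 (n - 1)) →
      ∀ i : ℕ, lowerBndSup m f < i → i ≤ n →
        OPBij (extMap m f i) (Finset.Icc 1 n)) ∧
    (∀ f g : {x : P // x ≠ m} → ℕ, ∀ i j : ℕ,
      OPBij f (Finset.Icc 1 (n - 1)) → lowerBndSup m f < i → i ≤ n →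
      OPBij g (Finset.Icc 1 (n - 1)) → lowerBndSup m g < j → j ≤ n →
      extMap m f i = extMap m g j → f = g ∧ i = j) ∧
    (∀ g : P → ℕ, OPBij g (Finset.Icc 1 n) →
      ∃ (f : {x : P // x ≠ m} → ℕ) (i : ℕ),
        OPBij f (Finset.Icc 1 (n - 1)) ∧ lowerBndSup m f < i ∧ i ≤ n ∧
        extMap m f i = g) ∧
    (∀ x : Fin n → P, Function.Bijective x → x ⟨n - 1, by omega⟩ = m →
      ∀ f : {y : P // y ≠ m} → ℕ, OPBij f (Finset.Icc 1 (n - 1)) →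
      ∀ i : ℕ, lowerBndSup m f < i → i ≤ n →
        epsN (fun j : Fin n => extMap m f i (x j)) =
          (-1 : ℤ) ^ (n - i) * epsN (restrictSeq m x f)) := by
  refine ⟨fun f hf i hi1 hi2 => extMap_OPBij hn m hm f hf i hi1 hi2, ?_, ?_, ?_⟩
  · -- injectivity of the assignment
    intro f g i j hf hfi hfin hg hgj hgn heq
    have him : i = j := by
      have := congrFun heq m
      rwa [extMap_m, extMap_m] at this
    refine ⟨?_, him⟩
    funext z
    have h2 := congrFun heq (z : P)
    rw [extMap_ne, extMap_ne, ← him] at h2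
    split_ifs at h2 <;> omega
  · -- surjectivity of the assignment
    intro g hg
    obtain ⟨gmono, ginj, gmem, gsurj⟩ := hg
    set i := g m with hi
    have hgm : ∀ p : P, 1 ≤ g p ∧ g p ≤ n := fun p => by
      have := gmem p; simpa [Finset.mem_Icc] using this
    have hne : ∀ z : {x : P // x ≠ m}, g (z : P) ≠ i := fun z h => z.2 (ginj h)
    have hlem : ∀ z : {x : P // x ≠ m}, (z : P) < m → g (z : P) < i := by
      intro z hz
      exact lt_of_le_of_ne (gmono hz.le) (hne z)
    refine ⟨fun z => if g (z : P) < i then g (z : P) else g (z : P) - 1, i,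
      ⟨?_, ?_, ?_, ?_⟩, ?_, (hgm m).2, ?_⟩
    · intro a b hab
      have h1 := gmono (show (a : P) ≤ (b : P) from hab)
      have h2 := hne a; have h3 := hne b
      dsimp only
      split_ifs <;> omega
    · intro a b hab
      have h2 := hne a; have h3 := hne b
      dsimp only at hab
      have : g (a : P) = g (b : P) := by split_ifs at hab <;> omega
      exact Subtype.ext (ginj this)
    · intro z
      have h1 := hgm (z : P); have h2 := hne z; have h3 := hgm m
      simp only [Finset.mem_Icc]
      split_ifs <;> omega
    · intro y hy
      simp only [Finset.mem_Icc] at hy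
      have him := hgm m
      by_cases hyi : y < i
      · obtain ⟨z, hz⟩ := gsurj y (by simp only [Finset.mem_Icc]; omega)
        have hzm : z ≠ m := fun h => by rw [h] at hz; omega
        exact ⟨⟨z, hzm⟩, by simp only; rw [hz, if_pos hyi]⟩
      · obtain ⟨z, hz⟩ := gsurj (y + 1) (by simp only [Finset.mem_Icc]; omega)
        have hzm : z ≠ m := fun h => by rw [h] at hz; omega
        exact ⟨⟨z, hzm⟩, by simp only; rw [hz, if_neg (by omega)]; omega⟩
    · -- lowerBndSup < i
      have hi0 : 0 < i := (hgm m).1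
      refine (Finset.sup_lt_iff hi0).mpr ?_
      intro z hz
      simp only [Finset.mem_filter] at hz
      have h2 := hlem z hz.2
      rw [if_pos h2]; exact h2
    · -- extMap = g
      funext p
      by_cases hp : p = m
      · rw [hp, extMap_m, hi]
      · rw [show p = ((⟨p, hp⟩ : {x : P // x ≠ m}) : P) from rfl, extMap_ne]
        have h1 := hgm p; have h2 : g p ≠ i := hne ⟨p, hp⟩; have h3 := hgm m
        dsimp only
        split_ifs <;> omega
  · -- signature
    intro x hx hxl f hf i hi1 hi2
    obtain ⟨hextmono, hextinj, hextmem, hextsurj⟩ :=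
      extMap_OPBij hn m hm f hf i hi1 hi2
    obtain ⟨fmono, finj, fmem, fsurj⟩ := hf
    have hi0 : 1 ≤ i := by omega
    set L : Fin n := ⟨n - 1, by omega⟩ with hLdef
    have hxL : x L = m := hxl
    have hxm : ∀ j : Fin n, x j = m ↔ j = L := fun j =>
      ⟨fun h => hx.1 (h.trans hxL.symm), fun h => h ▸ hxL⟩
    have hne1 : ∀ j : Fin n, j ≠ L → x j ≠ m := fun j hj h => hj ((hxm j).1 h)
    have hcast : ∀ j : Fin (n - 1), (Fin.castLE (Nat.sub_le n 1) j) ≠ L := by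
      intro j h
      have hj := j.isLt
      have h2 : (Fin.castLE (Nat.sub_le n 1) j).val = L.val := congrArg Fin.val h
      simp only [Fin.coe_castLE, hLdef] at h2
      omega
    have hr : ∀ (j : Fin (n - 1)) (h : x (Fin.castLE (Nat.sub_le n 1) j) ≠ m),
        restrictSeq m x f j = f ⟨x (Fin.castLE (Nat.sub_le n 1) j), h⟩ :=
      fun j h => dif_neg h
    have hval : ∀ (j : Fin n) (hj : x j ≠ m),
        extMap m f i (x j)
          = if f ⟨x j, hj⟩ < i then f ⟨x j, hj⟩ else f ⟨x j, hj⟩ + 1 :=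
      fun j hj => extMap_ne m f i ⟨x j, hj⟩
    have hvalL : extMap m f i (x L) = i := by rw [hxL, extMap_m]
    set A : Finset (Fin n × Fin n) := Finset.univ.filter
      (fun q : Fin n × Fin n =>
        q.1 < q.2 ∧ extMap m f i (x q.2) < extMap m f i (x q.1)) with hA
    set T : Finset (Fin (n - 1) × Fin (n - 1)) := Finset.univ.filter
      (fun q : Fin (n - 1) × Fin (n - 1) =>
        q.1 < q.2 ∧ restrictSeq m x f q.2 < restrictSeq m x f q.1) with hT
    have hsplit := Finset.card_filter_add_card_filter_not
      (s := A) (p := fun q : Fin n × Fin n => q.2 = L)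
    have hB : (A.filter (fun q : Fin n × Fin n => q.2 = L)).card = n - i := by
      have hbij : (A.filter (fun q : Fin n × Fin n => q.2 = L)).card
          = (Finset.Icc i (n - 1)).card := by
        refine Finset.card_nbij (fun a => extMap m f i (x a.1) - 1) ?_ ?_ ?_
        · intro a ha
          simp only [Finset.mem_coe, hA, Finset.mem_filter, Finset.mem_univ, true_and] at ha
          obtain ⟨⟨h1, h2⟩, h3⟩ := ha
          rw [h3, hvalL] at h2
          have h4 := hextmem (x a.1)
          simp only [Finset.mem_coe, Finset.mem_Icc] at h4 ⊢
          omega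
        · intro a ha b hb hab
          simp only [Finset.coe_filter, Set.mem_setOf_eq, hA, Finset.mem_filter,
            Finset.mem_univ, true_and] at ha hb
          obtain ⟨⟨h1, h2⟩, h3⟩ := ha
          obtain ⟨⟨h1', h2'⟩, h3'⟩ := hb
          rw [h3, hvalL] at h2
          rw [h3', hvalL] at h2'
          have hval2 : extMap m f i (x a.1) = extMap m f i (x b.1) := by
            dsimp only at hab; omega
          have hfst : a.1 = b.1 := hx.1 (hextinj hval2)
          rw [Prod.ext_iff]
          exact ⟨hfst, h3.trans h3'.symm⟩
        · intro y hy
          simp only [Finset.coe_Icc, Set.mem_Icc] at hy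
          obtain ⟨z, hz⟩ := fsurj y (by simp only [Finset.mem_Icc]; omega)
          obtain ⟨j, hj⟩ := hx.2 (z : P)
          have hjm : x j ≠ m := by rw [hj]; exact z.2
          have hjL : j ≠ L := fun h => hjm (h ▸ hxL)
          have hfz : f ⟨x j, hjm⟩ = y := by
            have : (⟨x j, hjm⟩ : {p : P // p ≠ m}) = z := Subtype.ext hj
            rw [this, hz]
          have hvj : extMap m f i (x j) = y + 1 := by
            rw [hval j hjm, hfz, if_neg (by omega)]
          refine ⟨(j, L), ?_, ?_⟩
          · simp only [Finset.mem_coe, Finset.mem_filter, hA, Finset.mem_univ,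
              true_and]
            refine ⟨⟨?_, ?_⟩, by trivial⟩
            · have hv := j.isLt
              have hv2 : j.val ≠ n - 1 := fun h => hjL (Fin.ext h)
              exact Fin.lt_def.mpr (by simp only [hLdef]; omega)
            · rw [hvalL, hvj]; omega
          · simp only [hvj]; omega
      rw [hbij, Nat.card_Icc]
      omega
    have hAT : (A.filter (fun q : Fin n × Fin n => ¬ q.2 = L)).card = T.card := by
      have hbound : ∀ a : Fin n × Fin n,
          a ∈ A.filter (fun q : Fin n × Fin n => ¬ q.2 = L) →
          a.1.val < n - 1 ∧ a.2.val < n - 1 := by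
        intro a ha
        simp only [hA, Finset.mem_filter, Finset.mem_univ, true_and] at ha
        obtain ⟨⟨h1, h2⟩, h3⟩ := ha
        have h4 := a.2.isLt
        have h5 : a.2.val ≠ n - 1 := fun h => h3 (Fin.ext h)
        have h6 : a.1.val < a.2.val := h1
        omega
      refine Finset.card_bij'
        (fun a ha => ((⟨a.1.val, (hbound a ha).1⟩ : Fin (n - 1)),
          (⟨a.2.val, (hbound a ha).2⟩ : Fin (n - 1))))
        (fun b _ => (Fin.castLE (Nat.sub_le n 1) b.1, Fin.castLE (Nat.sub_le n 1) b.2))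
        ?_ ?_ ?_ ?_
      · intro a ha
        have hb := hbound a ha
        simp only [hA, Finset.mem_filter, Finset.mem_univ, true_and] at ha
        obtain ⟨⟨h1, h2⟩, h3⟩ := ha
        have h1L : a.1 ≠ L := by
          intro h
          have := congrArg Fin.val h
          simp only [hLdef] at this
          omega
        simp only [hT, Finset.mem_filter, Finset.mem_univ, true_and]
        constructor
        · exact Fin.mk_lt_mk.mpr h1
        · rw [hr ⟨a.1.val, hb.1⟩
              ((hne1 a.1 h1L :) :
                x (Fin.castLE (Nat.sub_le n 1) ⟨a.1.val, hb.1⟩) ≠ m),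
            hr ⟨a.2.val, hb.2⟩
              ((hne1 a.2 h3 :) :
                x (Fin.castLE (Nat.sub_le n 1) ⟨a.2.val, hb.2⟩) ≠ m)]
          rw [hval a.1 (hne1 a.1 h1L), hval a.2 (hne1 a.2 h3)] at h2
          exact tau_lt.mp h2
      · intro b hb
        simp only [hT, Finset.mem_filter, Finset.mem_univ, true_and] at hb
        obtain ⟨h1, h2⟩ := hb
        simp only [hA, Finset.mem_filter, Finset.mem_univ, true_and]
        refine ⟨⟨?_, ?_⟩, hcast b.2⟩
        · exact h1
        · rw [hval _ (hne1 _ (hcast b.1)), hval _ (hne1 _ (hcast b.2))]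
          rw [hr b.1 (hne1 _ (hcast b.1)), hr b.2 (hne1 _ (hcast b.2))] at h2
          exact tau_lt.mpr h2
      · intro a ha
        rw [Prod.ext_iff]
        exact ⟨Fin.ext rfl, Fin.ext rfl⟩
      · intro b hb
        rw [Prod.ext_iff]
        exact ⟨Fin.ext rfl, Fin.ext rfl⟩
    have hcount : A.card = (n - i) + T.card := by omega
    simp only [epsN]
    rw [← hA, ← hT, hcount, pow_add]
end
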